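/- Let r, ζ > 0, H > 0, θ_k ∈ ℝ, and θ_l ∈ ℝ. Define b̂ = θ_l - sin(θ_l - θ_k) and = r² + ζ² + H² - rζ(2cos(θ_l - θ_k) + sin²(θ_l - θ_k)). Then for every θ ∈ ℝ, r² + ζ² + H² - 2rζ cos(θ - θ_k) ≤ rζ(θ - b̂)² + Â, and hence P γ₀ / (rζ(θ - b̂)² + Â) ≤ P γ₀ / (r² + ζ² + H² - 2rζ cos(θ - θ_k)) for any P, γ₀ > 0. -/

import Mathlib

private lemma sin_sub_le_abs (a b : ℝ) : |Real.sin a - Real.sin b| ≤ |a - b| := by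
  rw [Real.sin_sub_sin, abs_mul, abs_mul]
  have h1 : |Real.sin ((a - b)/2)| ≤ |(a - b)/2| := Real.abs_sin_le_abs
  have h2 : |Real.cos ((a + b)/2)| ≤ 1 := Real.abs_cos_le_one _
  calc |(2:ℝ)| * |Real.sin ((a-b)/2)| * |Real.cos ((a+b)/2)|
      ≤ |(2:ℝ)| * |(a-b)/2| * 1 := by
        apply mul_le_mul (mul_le_mul le_rfl h1 (abs_nonneg _) (abs_nonneg _)) h2 (abs_nonneg _)
        positivity
    _ = |a - b| := by rw [mul_one, abs_div, abs_two]; ring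

private lemma cos_taylor (x y : ℝ) :
    Real.cos y - Real.sin y * (x - y) - (x - y) ^ 2 / 2 ≤ Real.cos x := by
  set f : ℝ → ℝ := fun d => Real.cos (y + d) + Real.sin y * d + d ^ 2 / 2 with hf
  have hderiv : ∀ d : ℝ, HasDerivAt f (-Real.sin (y + d) + Real.sin y + d) d := by
    intro d
    have h1 : HasDerivAt (fun d : ℝ => Real.cos (y + d)) (-Real.sin (y + d)) d := by
      have := (Real.hasDerivAt_cos (y + d)).comp d ((hasDerivAt_id d).const_add y)
      rw [mul_one] at this
      exact this
    have h2 : HasDerivAt (fun d : ℝ => Real.sin y * d) (Real.sin y) d := by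
      simpa using (hasDerivAt_id d).const_mul (Real.sin y)
    have h3 : HasDerivAt (fun d : ℝ => d ^ 2 / 2) d d := by
      have := (hasDerivAt_pow 2 d).div_const 2
      simpa using this
    exact (h1.add h2).add h3
  have hcont : Continuous f := by
    apply Continuous.add
    apply Continuous.add
    · exact (Real.continuous_cos.comp (continuous_const.add continuous_id))
    · exact continuous_const.mul continuous_id
    · exact (continuous_pow 2).div_const 2
  have hdiff : ∀ d : ℝ, DifferentiableAt ℝ f d := fun d => (hderiv d).differentiableAt
  have key : ∀ d : ℝ, f 0 ≤ f d := by
    intro d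
    rcases le_total 0 d with hd | hd
    · have mono : MonotoneOn f (Set.Ici 0) := by
        apply monotoneOn_of_deriv_nonneg (convex_Ici 0) hcont.continuousOn
          (fun t _ => (hdiff t).differentiableWithinAt)
        intro t ht
        rw [(hderiv t).deriv]
        simp only [interior_Ici, Set.mem_Ioi] at ht
        have h := (abs_le.mp (sin_sub_le_abs (y + t) y)).2
        rw [show y + t - y = t by ring, abs_of_pos ht] at h
        linarith
      exact mono (Set.mem_Ici.mpr le_rfl) (Set.mem_Ici.mpr hd) hd
    · have anti : AntitoneOn f (Set.Iic 0) := by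
        apply antitoneOn_of_deriv_nonpos (convex_Iic 0) hcont.continuousOn
          (fun t _ => (hdiff t).differentiableWithinAt)
        intro t ht
        rw [(hderiv t).deriv]
        simp only [interior_Iic, Set.mem_Iio] at ht
        have h := (abs_le.mp (sin_sub_le_abs y (y + t))).2
        rw [show y - (y + t) = -t by ring, abs_of_pos (neg_pos.mpr ht)] at h
        linarith
      exact anti (Set.mem_Iic.mpr hd) (Set.mem_Iic.mpr le_rfl) hd
  have h0 : f 0 = Real.cos y := by simp [hf]
  have hx : f (x - y) = Real.cos x + Real.sin y * (x - y) + (x - y) ^ 2 / 2 := by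
    simp only [hf]
    ring_nf
  have := key (x - y)
  rw [h0, hx] at this
  linarith

theorem circular_snr_surrogate_bound (r ζ H θk θl : ℝ)
    (hr : 0 < r) (hζ : 0 < ζ) (hH : 0 < H) :
    ∀ θ : ℝ,
      (r ^ 2 + ζ ^ 2 + H ^ 2 - 2 * r * ζ * Real.cos (θ - θk) ≤
        r * ζ * (θ - (θl - Real.sin (θl - θk))) ^ 2
          + (r ^ 2 + ζ ^ 2 + H ^ 2
              - r * ζ * (2 * Real.cos (θl - θk) + (Real.sin (θl - θk)) ^ 2))) ∧
      ∀ P γ₀ : ℝ, 0 < P → 0 < γ₀ →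
        P * γ₀ / (r * ζ * (θ - (θl - Real.sin (θl - θk))) ^ 2
            + (r ^ 2 + ζ ^ 2 + H ^ 2
                - r * ζ * (2 * Real.cos (θl - θk) + (Real.sin (θl - θk)) ^ 2))) ≤
          P * γ₀ / (r ^ 2 + ζ ^ 2 + H ^ 2 - 2 * r * ζ * Real.cos (θ - θk)) := by
  intro θ
  have ht := cos_taylor (θ - θk) (θl - θk)
  have hfac : 0 ≤ (θ - (θl - Real.sin (θl - θk))) ^ 2
      - (2 * Real.cos (θl - θk) + (Real.sin (θl - θk)) ^ 2)
      + 2 * Real.cos (θ - θk) := by nlinarith [ht]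
  have hrz : 0 < r * ζ := mul_pos hr hζ
  have hmain : r ^ 2 + ζ ^ 2 + H ^ 2 - 2 * r * ζ * Real.cos (θ - θk) ≤
        r * ζ * (θ - (θl - Real.sin (θl - θk))) ^ 2
          + (r ^ 2 + ζ ^ 2 + H ^ 2
              - r * ζ * (2 * Real.cos (θl - θk) + (Real.sin (θl - θk)) ^ 2)) := by
    nlinarith [mul_nonneg hrz.le hfac]
  refine ⟨hmain, fun P γ₀ hP hγ => ?_⟩
  have hpos : 0 < r ^ 2 + ζ ^ 2 + H ^ 2 - 2 * r * ζ * Real.cos (θ - θk) := by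
    nlinarith [Real.cos_le_one (θ - θk), sq_nonneg (r - ζ), pow_pos hH 2]
  gcongr
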